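/- arXiv:1902.02862 — 5 statements merged into one kernel-verified Lean document; each statement's English description precedes it below -/
import Mathlib

section
/- Let k ≤ n and let B be a k×n real matrix whose columns span ℝ^k and which satisfies B·Bᵀ = γ·I_k for some real γ > 0 (i.e., the columns of B form a tight frame for ℝ^k). Suppose the additive subgroup B(ℤ^n) = {B·a : a ∈ ℤ^n} of ℝ^k is discrete. Then every entry of the Gram matrix Bᵀ·B is a rational multiple of γ; that is, (1/γ)·Bᵀ·B has all entries in ℚ. -/
set_option maxHeartbeats 1000000


/-- A tight frame generating a lattice must be rational: if `B * Bᵀ = γ • 1` with `γ > 0`,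
the columns of `B` span `ℝ^k`, and the integer span of the columns of `B` is discrete,
then every entry of `Bᵀ * B` is a rational multiple of `γ`. -/
theorem stmt_0 (k n : ℕ) (hkn : k ≤ n) (B : Matrix (Fin k) (Fin n) ℝ)
    (hspan : Submodule.span ℝ (Set.range fun j : Fin n => fun i : Fin k => B i j) = ⊤)
    (γ : ℝ) (hγ : 0 < γ)
    (htight : B * B.transpose = γ • (1 : Matrix (Fin k) (Fin k) ℝ))
    (hdisc : DiscreteTopology
      ↥(Set.range fun a : Fin n → ℤ => B.mulVec fun i => (a i : ℝ))) :
    ∀ i j : Fin n, ∃ q : ℚ, (B.transpose * B) i j = γ * q := by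
  classical
  -- the ℤ-linear map a ↦ B (a : ℝⁿ)
  let g : (Fin n → ℤ) →ₗ[ℤ] (Fin k → ℝ) :=
    { toFun := fun a => B.mulVec fun i => (a i : ℝ)
      map_add' := by
        intro a b
        show B.mulVec _ = B.mulVec _ + B.mulVec _
        rw [show (fun i => (((a + b) i : ℤ) : ℝ)) =
            (fun i => ((a i : ℤ) : ℝ)) + fun i => ((b i : ℤ) : ℝ) from
          funext fun i => by simp, Matrix.mulVec_add]
      map_smul' := by
        intro z a
        show B.mulVec _ = z • B.mulVec _
        rw [show (fun i => (((z • a) i : ℤ) : ℝ)) =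
            (z : ℝ) • fun i => ((a i : ℤ) : ℝ) from
          funext fun i => by simp, Matrix.mulVec_smul,
          Int.cast_smul_eq_zsmul] }
  let L : Submodule ℤ (Fin k → ℝ) := LinearMap.range g
  have hLset : (L : Set (Fin k → ℝ)) =
      Set.range fun a : Fin n → ℤ => B.mulVec fun i => (a i : ℝ) := rfl
  haveI hdL : DiscreteTopology L := hdisc
  -- the columns belong to L
  have hcol : ∀ j : Fin n, (fun i : Fin k => B i j) = g (Pi.single j 1) := by
    intro j
    funext i
    simp only [g, LinearMap.coe_mk, AddHom.coe_mk, Matrix.mulVec, dotProduct]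
    rw [Finset.sum_eq_single j]
    · simp
    · intro l _ hl; simp [Pi.single_apply, hl]
    · simp
  have hmem : ∀ j : Fin n, (fun i : Fin k => B i j) ∈ L := fun j =>
    (hcol j) ▸ LinearMap.mem_range_self g (Pi.single j 1)
  have hspanL : Submodule.span ℝ (L : Set (Fin k → ℝ)) = ⊤ := by
    rw [eq_top_iff, ← hspan]
    refine Submodule.span_mono ?_
    rintro x ⟨j, rfl⟩
    exact hmem j
  haveI : IsZLattice ℝ L := ⟨hspanL⟩
  haveI : Module.Free ℤ L := ZLattice.module_free ℝ L
  haveI : Module.Finite ℤ L := ZLattice.module_finite ℝ L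
  have hcard : Fintype.card (Module.Free.ChooseBasisIndex ℤ L) = k := by
    rw [← Module.finrank_eq_card_chooseBasisIndex, ZLattice.rank ℝ L]
    simp
  let b : Module.Basis (Fin k) ℤ L :=
    (Module.Free.chooseBasis ℤ L).reindex (Fintype.equivFinOfCardEq hcard)
  let b' : Module.Basis (Fin k) ℝ (Fin k → ℝ) := b.ofZLatticeBasis ℝ L
  let V : Matrix (Fin k) (Fin k) ℝ := Matrix.of fun i p => (b' p) i
  let M : Matrix (Fin k) (Fin n) ℤ :=
    Matrix.of fun p j => b.repr ⟨fun i => B i j, hmem j⟩ p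
  let Mr : Matrix (Fin k) (Fin n) ℝ := M.map (Int.cast)
  -- B = V * Mr
  have hBVM : B = V * Mr := by
    ext i j
    have h1 : ∀ p, b'.repr (fun i : Fin k => B i j) p = ((M p j : ℤ) : ℝ) := by
      intro p
      have : (fun i : Fin k => B i j) = ((⟨fun i => B i j, hmem j⟩ : L) : Fin k → ℝ) := rfl
      rw [this, Module.Basis.ofZLatticeBasis_repr_apply]
      rfl
    have h2 := b'.sum_repr (fun i : Fin k => B i j)
    have h3 := congrFun h2 i
    simp only [Finset.sum_apply, Pi.smul_apply, smul_eq_mul] at h3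
    rw [Matrix.mul_apply]
    rw [← h3]
    refine Finset.sum_congr rfl fun p _ => ?_
    rw [h1 p]
    exact mul_comm _ _
  -- determinant bookkeeping
  let A : Matrix (Fin k) (Fin k) ℤ := M * M.transpose
  let Ar : Matrix (Fin k) (Fin k) ℝ := A.map (Int.cast)
  have hAr : Ar = Mr * Mr.transpose := by
    ext i j
    simp only [Ar, A, Mr, Matrix.map_apply, Matrix.mul_apply, Matrix.transpose_apply]
    push_cast
    rfl
  have htight' : V * Ar * V.transpose = γ • (1 : Matrix (Fin k) (Fin k) ℝ) := by
    rw [hAr, ← htight, hBVM, Matrix.transpose_mul]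
    simp only [Matrix.mul_assoc]
  have hdet : V.det * Ar.det * V.det = γ ^ k := by
    have := congrArg Matrix.det htight'
    rw [Matrix.det_mul, Matrix.det_mul, Matrix.det_transpose, Matrix.det_smul,
      Matrix.det_one] at this
    simpa using this
  have hγk : γ ^ k ≠ 0 := pow_ne_zero _ hγ.ne'
  have hdetV : V.det ≠ 0 := by
    intro h; rw [h] at hdet; simp at hdet; exact hγk hdet.symm
  have hdetAr : Ar.det ≠ 0 := by
    intro h; rw [h] at hdet; simp at hdet; exact hγk hdet.symm
  haveI : Invertible V := V.invertibleOfIsUnitDet (isUnit_iff_ne_zero.mpr hdetV)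
  -- Ar * Vᵀ * V = γ • 1
  have hArV : Ar * V.transpose * V = γ • (1 : Matrix (Fin k) (Fin k) ℝ) := by
    apply Matrix.mul_right_injective_of_invertible V
    calc V * (Ar * V.transpose * V) = (V * Ar * V.transpose) * V := by
          simp [Matrix.mul_assoc]
      _ = (γ • (1 : Matrix (Fin k) (Fin k) ℝ)) * V := by rw [htight']
      _ = V * (γ • (1 : Matrix (Fin k) (Fin k) ℝ)) := by
          simp [Matrix.smul_mul, Matrix.mul_smul]
  have hinv : Ar⁻¹ = γ⁻¹ • (V.transpose * V) := by
    apply Matrix.inv_eq_right_inv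
    rw [Matrix.mul_smul, ← Matrix.mul_assoc, hArV, smul_smul, inv_mul_cancel₀ hγ.ne',
      one_smul]
  have hVtV : V.transpose * V = γ • Ar⁻¹ := by
    rw [hinv, smul_smul, mul_inv_cancel₀ hγ.ne', one_smul]
  -- rationality of Ar⁻¹
  let Aq : Matrix (Fin k) (Fin k) ℚ := A.map (Int.cast)
  have hAq : Ar = Aq.map (Rat.cast) := by
    ext i j
    show ((A i j : ℤ) : ℝ) = (((A i j : ℤ) : ℚ) : ℝ)
    push_cast
    rfl
  have hcastR : (Rat.cast : ℚ → ℝ) = ⇑(Rat.castHom ℝ) := rfl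
  have hdetAq : Aq.det ≠ 0 := by
    intro h
    apply hdetAr
    rw [hAq, hcastR, ← RingHom.mapMatrix_apply (f := Rat.castHom ℝ),
      ← RingHom.map_det, h]
    simp
  have hArinv : Ar⁻¹ = (Aq⁻¹).map (Rat.cast) := by
    apply Matrix.inv_eq_right_inv
    rw [hAq, hcastR, ← Matrix.map_mul,
      Matrix.mul_nonsing_inv _ (isUnit_iff_ne_zero.mpr hdetAq)]
    simp
  -- final computation
  let C : Matrix (Fin n) (Fin n) ℚ :=
    (M.map (Int.cast : ℤ → ℚ)).transpose * Aq⁻¹ * (M.map (Int.cast : ℤ → ℚ))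
  have hfinal : B.transpose * B = γ • (C.map (Rat.cast)) := by
    have hMq : Mr = (M.map (Int.cast : ℤ → ℚ)).map (Rat.cast) := by
      ext i j
      show ((M i j : ℤ) : ℝ) = (((M i j : ℤ) : ℚ) : ℝ)
      push_cast
      rfl
    calc B.transpose * B = Mr.transpose * (V.transpose * V) * Mr := by
          rw [hBVM]; simp [Matrix.transpose_mul, Matrix.mul_assoc]
      _ = Mr.transpose * (γ • Ar⁻¹) * Mr := by rw [hVtV]
      _ = γ • (Mr.transpose * Ar⁻¹ * Mr) := by
          simp [Matrix.mul_smul, Matrix.smul_mul]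
      _ = γ • (C.map (Rat.cast)) := by
          rw [hArinv, hMq, ← Matrix.transpose_map, hcastR,
            ← Matrix.map_mul, ← Matrix.map_mul]
  intro i j
  refine ⟨C i j, ?_⟩
  rw [hfinal]
  simp only [Matrix.smul_apply, Matrix.map_apply, smul_eq_mul]
end

section
/- Let k, m ≥ 1, n = k + m, and let B = [B₀ | B₁] be a k×n real matrix whose first k columns form an invertible k×k matrix B₀ and whose last m columns form the k×m matrix B₁. If the additive subgroup B(ℤ^n) = {B·a : a ∈ ℤ^n} of ℝ^k is discrete, then the matrix B₀⁻¹·B₁ has all entries in ℚ. -/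
open Submodule Module Matrix

private lemma key_lemma {k : ℕ} (L : Submodule ℤ (Fin k → ℝ)) (hd : DiscreteTopology L)
    (ε : Fin k → (Fin k → ℝ)) (hε : ∀ i, ε i ∈ L)
    (hεs : Submodule.span ℝ (Set.range ε) = ⊤)
    (x : Fin k → ℝ) (hx : x ∈ L) :
    ∃ (N : ℤ) (c : Fin k → ℤ), N ≠ 0 ∧ N • x = ∑ i, c i • ε i := by
  classical
  haveI := hd
  haveI : IsZLattice ℝ L := ⟨by
    rw [← top_le_iff, ← hεs]
    exact Submodule.span_mono (Set.range_subset_iff.2 hε)⟩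
  let b := Module.Free.chooseBasis ℤ L
  have hcard : Fintype.card (Module.Free.ChooseBasisIndex ℤ L) = k := by
    rw [← finrank_eq_card_chooseBasisIndex, ZLattice.rank ℝ L]
    simp
  let σ : Module.Free.ChooseBasisIndex ℤ L ≃ Fin k := Fintype.equivFinOfCardEq hcard
  let β : Fin k → (Fin k → ℝ) := fun r => (b (σ.symm r) : Fin k → ℝ)
  have hβ : ∀ y : L, (y : Fin k → ℝ) = ∑ r, (b.repr y (σ.symm r)) • β r := by
    intro y
    have h1 : (y : Fin k → ℝ) = ((∑ i, b.repr y i • b i : L) : Fin k → ℝ) := by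
      rw [b.sum_repr]
    rw [h1]
    rw [← Equiv.sum_comp σ.symm (fun i => b.repr y i • b i)]
    push_cast
    rfl
  let A : Matrix (Fin k) (Fin k) ℤ := Matrix.of fun r i => b.repr ⟨ε i, hε i⟩ (σ.symm r)
  have hεeq : ∀ i, ε i = ∑ r, A r i • β r := fun i => hβ ⟨ε i, hε i⟩
  -- `det A ≠ 0`
  let Bε : Matrix (Fin k) (Fin k) ℝ := Matrix.of fun s i => ε i s
  have hBε : IsUnit Bε := by
    rw [← Matrix.mulVec_surjective_iff_isUnit]
    have hr : LinearMap.range Bε.mulVecLin = ⊤ := by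
      rw [Matrix.range_mulVecLin]
      have : Bε.col = ε := rfl
      rw [this, hεs]
    have hs := LinearMap.range_eq_top.mp hr
    exact hs
  let M : Matrix (Fin k) (Fin k) ℝ := Matrix.of fun s r => β r s
  have hMA : Bε = M * A.map (Int.cast : ℤ → ℝ) := by
    ext s i
    have : Bε s i = ε i s := rfl
    rw [this, hεeq i]
    simp [Matrix.mul_apply, Finset.sum_apply, M, mul_comm]
  have hdetA : A.det ≠ 0 := by
    intro h0
    have hcast : (A.map (Int.cast : ℤ → ℝ)).det = ((A.det : ℤ) : ℝ) := by
      rw [show A.map (Int.cast : ℤ → ℝ) = (Int.castRingHom ℝ).mapMatrix A from rfl,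
        ← RingHom.map_det]
      rfl
    have : Bε.det = 0 := by
      rw [hMA, Matrix.det_mul, hcast, h0]
      simp
    exact (hBε.map (Matrix.detMonoidHom)).ne_zero this
  -- conclusion
  let c' : Fin k → ℤ := fun r => b.repr ⟨x, hx⟩ (σ.symm r)
  have hxeq : x = ∑ r, c' r • β r := hβ ⟨x, hx⟩
  refine ⟨A.det, A.adjugate.mulVec c', hdetA, ?_⟩
  have hmv : A.mulVec (A.adjugate.mulVec c') = A.det • c' := by
    rw [Matrix.mulVec_mulVec, Matrix.mul_adjugate, Matrix.smul_mulVec, Matrix.one_mulVec]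
  have hrhs : ∑ i, (A.adjugate.mulVec c') i • ε i
      = ∑ r, (A.mulVec (A.adjugate.mulVec c')) r • β r := by
    simp_rw [hεeq, Finset.smul_sum, smul_smul]
    rw [Finset.sum_comm]
    refine Finset.sum_congr rfl fun r _ => ?_
    rw [Matrix.mulVec, dotProduct, Finset.sum_smul]
    refine Finset.sum_congr rfl fun i _ => ?_
    rw [mul_comm]
  rw [hrhs, hmv, hxeq, Finset.smul_sum]
  refine Finset.sum_congr rfl fun r _ => ?_
  rw [smul_smul]
  simp [smul_eq_mul]

/-- If `B = [B₀ | B₁]` with `B₀` invertible and the integer span of the columns of `B`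
is discrete, then `B₀⁻¹ * B₁` has rational entries. -/
theorem stmt_1 (k m : ℕ) (hk : 1 ≤ k) (hm : 1 ≤ m)
    (B₀ : Matrix (Fin k) (Fin k) ℝ) (B₁ : Matrix (Fin k) (Fin m) ℝ)
    (hB₀ : IsUnit B₀)
    (hdisc : DiscreteTopology
      ↥(Set.range fun a : Fin k ⊕ Fin m → ℤ =>
          (Matrix.fromCols B₀ B₁).mulVec fun i => (a i : ℝ))) :
    ∀ (i : Fin k) (j : Fin m), ∃ q : ℚ, (B₀⁻¹ * B₁) i j = q := by
  classical
  intro i j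
  set v : Fin k ⊕ Fin m → (Fin k → ℝ) := (Matrix.fromCols B₀ B₁)ᵀ with hv
  set L : Submodule ℤ (Fin k → ℝ) :=
    LinearMap.range (Fintype.linearCombination ℤ v) with hL
  have hfeq : ⇑(Fintype.linearCombination ℤ v)
      = fun a : Fin k ⊕ Fin m → ℤ =>
          (Matrix.fromCols B₀ B₁).mulVec fun i => (a i : ℝ) := by
    funext a
    rw [Fintype.linearCombination_apply]
    funext s
    rw [Matrix.mulVec, dotProduct]
    rw [Finset.sum_apply]
    refine Finset.sum_congr rfl fun p _ => ?_
    simp [v, mul_comm]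
  have hsets : (L : Set (Fin k → ℝ))
      = Set.range fun a : Fin k ⊕ Fin m → ℤ =>
          (Matrix.fromCols B₀ B₁).mulVec fun i => (a i : ℝ) := by
    rw [hL, LinearMap.coe_range, hfeq]
  have hd : DiscreteTopology L := by
    rw [← hsets] at hdisc
    exact hdisc
  have hmem : ∀ p, v p ∈ L := by
    intro p
    rw [hL, Fintype.range_linearCombination]
    exact subset_span ⟨p, rfl⟩
  have hεs : Submodule.span ℝ (Set.range fun i => v (Sum.inl i)) = ⊤ := by
    have hεB : (fun i => v (Sum.inl i)) = B₀.col := by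
      funext i s
      simp [v, Matrix.col]
    rw [hεB, ← Matrix.range_mulVecLin, LinearMap.range_eq_top]
    have := Matrix.mulVec_surjective_iff_isUnit.mpr hB₀
    exact this
  obtain ⟨N, c, hN, heq⟩ := key_lemma L hd (fun i => v (Sum.inl i)) (fun i => hmem _)
    hεs (v (Sum.inr j)) (hmem _)
  -- turn `heq` into entrywise statement
  have hent : ∀ s, (N : ℝ) * B₁ s j = B₀.mulVec (fun r => (c r : ℝ)) s := by
    intro s
    have h := congrFun heq s
    rw [Finset.sum_apply] at h
    have hl : (N • v (Sum.inr j)) s = (N : ℝ) * B₁ s j := by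
      simp [v]
    have hr : ∀ r : Fin k, (c r • v (Sum.inl r)) s = B₀ s r * (c r : ℝ) := by
      intro r
      simp [v, mul_comm]
    rw [hl] at h
    rw [h, Matrix.mulVec, dotProduct]
    exact Finset.sum_congr rfl fun r _ => hr r
  have hdet : IsUnit B₀.det := (Matrix.isUnit_iff_isUnit_det B₀).mp hB₀
  have hmain : (N : ℝ) * (B₀⁻¹ * B₁) i j = (c i : ℝ) := by
    calc (N : ℝ) * (B₀⁻¹ * B₁) i j
        = ∑ r, B₀⁻¹ i r * ((N : ℝ) * B₁ r j) := by
          rw [Matrix.mul_apply, Finset.mul_sum]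
          exact Finset.sum_congr rfl fun r _ => by ring
      _ = ∑ r, B₀⁻¹ i r * (B₀.mulVec (fun r => (c r : ℝ))) r := by
          exact Finset.sum_congr rfl fun r _ => by rw [hent r]
      _ = (B₀⁻¹.mulVec (B₀.mulVec (fun r => (c r : ℝ)))) i := rfl
      _ = ((B₀⁻¹ * B₀).mulVec (fun r => (c r : ℝ))) i := by rw [Matrix.mulVec_mulVec]
      _ = (c i : ℝ) := by rw [Matrix.nonsing_inv_mul _ hdet, Matrix.one_mulVec]
  refine ⟨(c i : ℚ) / (N : ℚ), ?_⟩
  have hNR : (N : ℝ) ≠ 0 := Int.cast_ne_zero.mpr hN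
  push_cast
  rw [eq_div_iff hNR]
  linarith [hmain]
end

section
/- Let k, m ≥ 1, n = k + m, and let B be a k×n real matrix of the form B = D·[U | V], where D is a k×k diagonal matrix with positive diagonal entries d_1,…,d_k, U is a k×k upper-triangular matrix with all diagonal entries equal to 1, and V is a k×m real matrix. Assume: (i) the additive subgroup B(ℤ^n) of ℝ^k is discrete; (ii) for all i ≠ j, the (i,j) entry of [U|V]·[U|V]ᵀ is rational (equivalently, the inner product of the i-th and j-th rows of B equals d_i·d_j·q_{ij} with q_{ij} ∈ ℚ); and (iii) every diagonal entry of B·Bᵀ is rational. Then the Gram matrix Bᵀ·B has all entries in ℚ (in particular, all pairwise inner products of the columns of B are rational). -/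
open Matrix Module Submodule

section Aux

lemma intRange_eq_span {ι κ : Type*} [Fintype ι] [Fintype κ] [DecidableEq κ]
    (B : Matrix ι κ ℝ) :
    (Set.range fun a : κ → ℤ => B.mulVec fun i => (a i : ℝ))
      = (span ℤ (Set.range Bᵀ) : Set (ι → ℝ)) := by
  have key : ∀ a : κ → ℤ, (B.mulVec fun i => (a i : ℝ)) = ∑ j, a j • Bᵀ j := by
    intro a
    funext i
    simp only [Matrix.mulVec, dotProduct, Finset.sum_apply]
    exact Finset.sum_congr rfl fun j _ => by
      rw [Pi.smul_apply, Matrix.transpose_apply, zsmul_eq_mul, mul_comm]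
  ext x
  simp only [Set.mem_range, SetLike.mem_coe]
  constructor
  · rintro ⟨a, rfl⟩
    rw [key]
    exact sum_mem fun j _ => zsmul_mem (subset_span (Set.mem_range_self j)) _
  · intro hx
    refine Submodule.span_induction ?_ ?_ ?_ ?_ hx
    · rintro v ⟨j, rfl⟩
      refine ⟨Pi.single j 1, ?_⟩
      have h1 : (fun i => (((Pi.single j 1 : κ → ℤ) i : ℤ) : ℝ)) = Pi.single j (1:ℝ) := by
        funext i
        by_cases h : i = j <;> simp [Pi.single_apply, h]
      rw [h1, Matrix.mulVec_single]
      funext i; simp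
    · refine ⟨0, ?_⟩
      show B.mulVec _ = 0
      have h0 : (fun i => (((0 : κ → ℤ) i : ℤ) : ℝ)) = (0 : κ → ℝ) := by
        funext i; simp
      rw [h0, Matrix.mulVec_zero]
    · rintro u v - - ⟨a, rfl⟩ ⟨b, rfl⟩
      refine ⟨a + b, ?_⟩
      show B.mulVec _ = _
      have : (fun i => (((a + b) i : ℤ) : ℝ))
          = (fun i => ((a i : ℤ) : ℝ)) + fun i => ((b i : ℤ) : ℝ) := by
        funext i; push_cast; simp
      rw [this, Matrix.mulVec_add]
    · rintro z v - ⟨a, rfl⟩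
      refine ⟨z • a, ?_⟩
      show B.mulVec _ = _
      have h2 : (fun i => (((z • a) i : ℤ) : ℝ)) = (z:ℝ) • fun i => ((a i : ℤ) : ℝ) := by
        funext i; push_cast; simp [mul_comm]
      rw [h2, Matrix.mulVec_smul, Int.cast_smul_eq_zsmul]

lemma quad_form_eq {ι μ : Type*} [Fintype ι] [Fintype μ] [DecidableEq ι]
    (C : Matrix ι μ ℚ) (v : ι → ℚ) :
    v ⬝ᵥ ((1 + C * Cᵀ).mulVec v) = v ⬝ᵥ v + (Cᵀ.mulVec v) ⬝ᵥ (Cᵀ.mulVec v) := by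
  rw [Matrix.add_mulVec, Matrix.one_mulVec, dotProduct_add, ← Matrix.mulVec_mulVec,
    Matrix.dotProduct_mulVec, ← Matrix.mulVec_transpose]

lemma isUnit_one_add_mul_self {ι μ : Type*} [Fintype ι] [Fintype μ] [DecidableEq ι]
    (C : Matrix ι μ ℚ) : IsUnit (1 + C * Cᵀ) := by
  rw [Matrix.isUnit_iff_isUnit_det, isUnit_iff_ne_zero]
  intro hdet
  obtain ⟨v, hv, hv0⟩ := (Matrix.exists_mulVec_eq_zero_iff).mpr hdet
  have h := quad_form_eq C v
  rw [hv0, dotProduct_zero] at h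
  have hnn1 : 0 ≤ v ⬝ᵥ v := by
    rw [dotProduct]; exact Finset.sum_nonneg fun i _ => mul_self_nonneg _
  have hnn2 : 0 ≤ (Cᵀ.mulVec v) ⬝ᵥ (Cᵀ.mulVec v) := by
    rw [dotProduct]; exact Finset.sum_nonneg fun i _ => mul_self_nonneg _
  have h1 : v ⬝ᵥ v = 0 := by linarith
  exact hv (dotProduct_self_eq_zero.mp h1)

lemma map_cast_inv {ι : Type*} [Fintype ι] [DecidableEq ι] (A : Matrix ι ι ℚ)
    (hA : IsUnit A.det) :
    (A⁻¹).map (Rat.cast : ℚ → ℝ) = (A.map (Rat.cast : ℚ → ℝ))⁻¹ := by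
  refine (Matrix.inv_eq_right_inv ?_).symm
  have : (A.map (Rat.cast : ℚ → ℝ)) * (A⁻¹).map (Rat.cast : ℚ → ℝ)
      = (A * A⁻¹).map (Rat.cast : ℚ → ℝ) := by
    ext i j
    simp only [Matrix.map_apply, Matrix.mul_apply]
    push_cast
    rfl
  rw [this, Matrix.mul_nonsing_inv _ hA]
  ext i j
  simp [Matrix.one_apply, apply_ite]

lemma det_map_cast {ι : Type*} [Fintype ι] [DecidableEq ι] (A : Matrix ι ι ℚ) :
    (A.map (Rat.cast : ℚ → ℝ)).det = ((A.det : ℚ) : ℝ) :=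
  (RingHom.map_det (Rat.castHom ℝ) A).symm

lemma solve_rat {ι : Type*} [Fintype ι] [DecidableEq ι] (A : Matrix ι ι ℚ)
    (hA : IsUnit A.det) (x : ι → ℝ) (bq : ι → ℚ)
    (h : ∀ j, (∑ l, x l * (A l j : ℝ)) = (bq j : ℝ)) :
    ∀ l, ∃ q : ℚ, (q : ℝ) = x l := by
  have hAc : IsUnit (A.map (Rat.cast : ℚ → ℝ)).det := by
    rw [det_map_cast, isUnit_iff_ne_zero]
    exact_mod_cast (isUnit_iff_ne_zero.mp hA)
  have hx : x ᵥ* (A.map (Rat.cast : ℚ → ℝ)) = fun j => (bq j : ℝ) := by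
    funext j
    rw [← h j]
    simp [Matrix.vecMul, dotProduct]
  have hxx : x = (fun j => (bq j : ℝ)) ᵥ* (A.map (Rat.cast : ℚ → ℝ))⁻¹ := by
    rw [← hx, Matrix.vecMul_vecMul, Matrix.mul_nonsing_inv _ hAc, Matrix.vecMul_one]
  intro l
  refine ⟨(bq ᵥ* A⁻¹) l, ?_⟩
  rw [hxx, ← map_cast_inv A hA]
  simp [Matrix.vecMul, dotProduct, Matrix.map_apply]

lemma cols_mem_rat_span {k : ℕ} {κ : Type*} [Fintype κ] [DecidableEq κ]
    (hk : 0 < k) (B : Matrix (Fin k) κ ℝ) (A : Matrix (Fin k) (Fin k) ℝ) (hA : IsUnit A)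
    (hcols : ∀ i : Fin k, Aᵀ i ∈ Set.range Bᵀ)
    (hdisc : DiscreteTopology (span ℤ (Set.range Bᵀ) : Submodule ℤ (Fin k → ℝ))) :
    ∀ j : κ, Bᵀ j ∈ span ℚ (Set.range Aᵀ) := by
  classical
  haveI : Nonempty (Fin k) := ⟨⟨0, hk⟩⟩
  set L : Submodule ℤ (Fin k → ℝ) := span ℤ (Set.range Bᵀ) with hL
  have hBL : ∀ j : κ, Bᵀ j ∈ L := fun j => subset_span (Set.mem_range_self j)
  have hAL : ∀ i : Fin k, Aᵀ i ∈ L := fun i => by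
    obtain ⟨j, hj⟩ := hcols i
    exact hj ▸ hBL j
  have hAli : LinearIndependent ℝ fun i => Aᵀ i :=
    Matrix.linearIndependent_cols_iff_isUnit.mpr hA
  have hAliQ : LinearIndependent ℚ fun i => Aᵀ i := by
    refine hAli.restrict_scalars ?_
    intro a b h
    have : (a : ℝ) = (b : ℝ) := by
      simpa [Rat.smul_one_eq_cast] using h
    exact_mod_cast this
  have hAtop : span ℝ (Set.range fun i => Aᵀ i) = ⊤ := by
    apply LinearIndependent.span_eq_top_of_card_eq_finrank hAli
    simp [Module.finrank_pi]
  haveI : IsZLattice ℝ L := by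
    constructor
    rw [eq_top_iff, ← hAtop]
    exact span_le.mpr (fun x ⟨i, hi⟩ => subset_span (hi ▸ hAL i))
  have hrank : finrank ℤ L = k := by
    rw [ZLattice.rank ℝ, Module.finrank_pi]
    simp
  haveI : Module.Finite ℤ L := inferInstance
  haveI : Module.Free ℤ L := inferInstance
  let b := Module.Free.chooseBasis ℤ L
  let v : Module.Free.ChooseBasisIndex ℤ L → (Fin k → ℝ) := fun i => (b i : Fin k → ℝ)
  have hLv : ∀ x ∈ L, x ∈ span ℚ (Set.range v) := by
    intro x hx
    have h1 : (⟨x, hx⟩ : L) ∈ span ℤ (Set.range b) := by rw [b.span_eq]; trivial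
    have h2 : x ∈ map L.subtype (span ℤ (Set.range b)) := ⟨⟨x, hx⟩, h1, rfl⟩
    rw [Submodule.map_span, ← Set.range_comp] at h2
    exact span_le_restrictScalars ℤ ℚ _ h2
  set P : Submodule ℚ (Fin k → ℝ) := span ℚ (Set.range v) with hPdef
  haveI : FiniteDimensional ℚ P := FiniteDimensional.span_of_finite ℚ (Set.finite_range v)
  have hPrank : finrank ℚ P ≤ k := by
    have h1 : finrank ℚ P ≤ (Set.range v).toFinset.card := finrank_span_le_card _
    refine h1.trans ?_
    rw [Set.toFinset_range]
    refine (Finset.card_image_le).trans ?_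
    rw [Finset.card_univ, ← Module.finrank_eq_card_chooseBasisIndex, hrank]
  set Q : Submodule ℚ (Fin k → ℝ) := span ℚ (Set.range fun i => Aᵀ i) with hQdef
  have hQrank : finrank ℚ Q = k := by
    rw [hQdef, finrank_span_eq_card hAliQ, Fintype.card_fin]
  have hQP : Q ≤ P := by
    rw [hQdef]
    exact span_le.mpr (fun x ⟨i, hi⟩ => hi ▸ hLv _ (hAL i))
  have hQeqP : Q = P := Submodule.eq_of_le_of_finrank_le hQP (by rw [hQrank]; exact hPrank)
  intro j
  have : Bᵀ j ∈ P := hLv _ (hBL j)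
  rw [← hQeqP] at this
  simpa using this

lemma U_entries_rat {k m : ℕ} (U : Matrix (Fin k) (Fin k) ℝ)
    (hU1 : ∀ i, U i i = 1) (hUtri : ∀ i j : Fin k, j < i → U i j = 0)
    (Cq : Matrix (Fin k) (Fin m) ℚ)
    (hoff : ∀ i j : Fin k, i ≠ j → ∃ q : ℚ,
      (U * (((1 + Cq * Cqᵀ) : Matrix (Fin k) (Fin k) ℚ).map (Rat.cast : ℚ → ℝ)) * Uᵀ) i j
        = (q : ℝ)) :
    ∀ i l : Fin k, ∃ q : ℚ, (q : ℝ) = U i l := by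
  classical
  set Sq : Matrix (Fin k) (Fin k) ℚ := 1 + Cq * Cqᵀ with hSqdef
  set Sc : Matrix (Fin k) (Fin k) ℝ := Sq.map (Rat.cast : ℚ → ℝ) with hScdef
  suffices H : ∀ n : ℕ, ∀ i : Fin k, k - i.val ≤ n → ∀ l, ∃ q : ℚ, (q : ℝ) = U i l by
    exact fun i l => H k i (Nat.sub_le _ _) l
  intro n
  induction n with
  | zero => intro i hi; exact absurd hi (by have := i.isLt; omega)
  | succ n IH =>
    intro i hi l
    rcases lt_trichotomy l i with hl | hl | hl
    · exact ⟨0, by rw [hUtri i l hl]; simp⟩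
    · exact ⟨1, by rw [hl, hU1]; simp⟩
    · have IH' : ∀ j : Fin k, i < j → ∀ l', ∃ q : ℚ, (q : ℝ) = U j l' := by
        intro j hj l'
        refine IH j ?_ l'
        have h1 := j.isLt
        have h2 : i.val < j.val := hj
        omega
      choose Uq hUq using fun (j : {j : Fin k // i < j}) (l' : Fin k) => IH' j.1 j.2 l'
      set W : Matrix {j : Fin k // i < j} {j : Fin k // i < j} ℚ :=
        fun p j => Uq j p.1 with hWdef
      set St : Matrix {j : Fin k // i < j} {j : Fin k // i < j} ℚ :=
        Sq.submatrix Subtype.val Subtype.val with hStdef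
      have hStunit : IsUnit St.det := by
        have hSteq : St = 1 + (Cq.submatrix Subtype.val id) * (Cq.submatrix Subtype.val id)ᵀ := by
          ext a b
          simp only [hStdef, Matrix.submatrix_apply, hSqdef, Matrix.add_apply,
            Matrix.mul_apply, Matrix.one_apply, Matrix.transpose_apply, id_eq]
          congr 1
          simp [Subtype.ext_iff]
        rw [hSteq, ← Matrix.isUnit_iff_isUnit_det]
        exact isUnit_one_add_mul_self _
      have hWdet : W.det = 1 := by
        rw [← Matrix.det_transpose]
        have htri : (Wᵀ).BlockTriangular id := by
          intro a b hab
          have hab' : b.1 < a.1 := hab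
          have : (Uq a b.1 : ℝ) = ((0 : ℚ) : ℝ) := by
            rw [hUq, hUtri a.1 b.1 hab', Rat.cast_zero]
          exact Rat.cast_injective this
        rw [Matrix.det_of_upperTriangular htri]
        refine Finset.prod_eq_one fun a _ => ?_
        have : (Uq a a.1 : ℝ) = ((1 : ℚ) : ℝ) := by
          rw [hUq, hU1, Rat.cast_one]
        exact Rat.cast_injective this
      have hAdet : IsUnit (St * W).det := by
        rw [Matrix.det_mul, hWdet, mul_one]
        exact hStunit
      choose qoff hqoff using fun j : {j : Fin k // i < j} => hoff i j.1 (ne_of_lt j.2)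
      set g : Fin k → {j : Fin k // i < j} → ℝ :=
        fun p j => ∑ q : {j : Fin k // i < j}, (Sq p q.1 : ℝ) * (Uq j q.1 : ℝ) with hgdef
      have claim1 : ∀ (p : Fin k) (j : {j : Fin k // i < j}), (Sc * Uᵀ) p j.1 = g p j := by
        intro p j
        rw [Matrix.mul_apply]
        rw [← Finset.sum_filter_add_sum_filter_not Finset.univ (fun q => i < q)]
        have hzero : ∑ q ∈ Finset.univ.filter (fun q => ¬ i < q),
            Sc p q * Uᵀ q j.1 = 0 := by
          refine Finset.sum_eq_zero fun q hq => ?_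
          rw [Finset.mem_filter] at hq
          have hq2 : q < j.1 := lt_of_le_of_lt (not_lt.mp hq.2) j.2
          rw [Matrix.transpose_apply, hUtri j.1 q hq2, mul_zero]
        rw [hzero, add_zero]
        rw [Finset.sum_subtype (p := fun q => i < q) _ (by simp)]
        refine Finset.sum_congr rfl fun q _ => ?_
        rw [Matrix.transpose_apply, ← hUq, hScdef, Matrix.map_apply]
      have claim2 : ∀ j : {j : Fin k // i < j},
          (∑ p : {j : Fin k // i < j}, U i p.1 * g p.1 j) + g i j = (qoff j : ℝ) := by
        intro j
        have h1 := hqoff j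
        rw [Matrix.mul_assoc, Matrix.mul_apply] at h1
        rw [← Finset.sum_filter_add_sum_filter_not Finset.univ (fun p => i < p)] at h1
        have h2 : ∑ p ∈ Finset.univ.filter (fun p => ¬ i < p),
            U i p * (Sc * Uᵀ) p j.1 = g i j := by
          rw [Finset.sum_eq_single_of_mem i (by simp)]
          · rw [hU1, one_mul, claim1]
          · intro b hb hbne
            rw [Finset.mem_filter] at hb
            rw [hUtri i b (lt_of_le_of_ne (not_lt.mp hb.2) hbne), zero_mul]
        rw [h2] at h1
        rw [Finset.sum_subtype (p := fun q => i < q) _ (by simp)] at h1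
        have h3 : (∑ a : { q : Fin k // i < q }, U i a.1 * (Sc * Uᵀ) a.1 j.1)
            = ∑ p : { q : Fin k // i < q }, U i p.1 * g p.1 j :=
          Finset.sum_congr rfl fun p _ => by rw [claim1]
        rw [h3] at h1
        exact h1
      set toff : {j : Fin k // i < j} → ℚ :=
        fun j => ∑ q : {j : Fin k // i < j}, Sq i q.1 * Uq j q.1 with htoffdef
      have hsys : ∀ j : {j : Fin k // i < j},
          (∑ p : {j : Fin k // i < j}, U i p.1 * ((St * W) p j : ℝ))
            = ((qoff j - toff j : ℚ) : ℝ) := by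
        intro j
        have hAg : ∀ p : {j : Fin k // i < j}, ((St * W) p j : ℝ) = g p.1 j := by
          intro p
          rw [hgdef]
          push_cast [Matrix.mul_apply, hStdef, hWdef, Matrix.submatrix_apply]
          show ((∑ q : {j : Fin k // i < j}, Sq p.1 q.1 * Uq j q.1 : ℚ) : ℝ) = _
          rw [Rat.cast_sum]; simp only [Rat.cast_mul]
        have htg : (toff j : ℝ) = g i j := by
          rw [htoffdef, hgdef]
          push_cast
          rfl
        have hsum : (∑ p : {j : Fin k // i < j}, U i p.1 * ((St * W) p j : ℝ))
            = ∑ p : {j : Fin k // i < j}, U i p.1 * g p.1 j :=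
          Finset.sum_congr rfl fun p _ => by rw [hAg]
        rw [hsum]
        push_cast
        rw [htg]
        linarith [claim2 j]
      have := solve_rat (St * W) hAdet (fun p : {j : Fin k // i < j} => U i p.1)
        (fun j => qoff j - toff j) hsys
      exact this ⟨l, hl⟩

end Aux

/-- Rationality criterion for lattice-generating systems of vectors: if
`B = D * [U | V]` with `D` diagonal positive, `U` upper-triangular unipotent,
the integer span of the columns of `B` is discrete, the off-diagonal entries of
`[U|V] * [U|V]ᵀ` are rational and the diagonal entries of `B * Bᵀ` are rational,
then all entries of the Gram matrix `Bᵀ * B` are rational. -/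
theorem stmt_2 (k m : ℕ) (hk : 1 ≤ k) (hm : 1 ≤ m)
    (d : Fin k → ℝ) (hd : ∀ i, 0 < d i)
    (U : Matrix (Fin k) (Fin k) ℝ) (hU1 : ∀ i, U i i = 1)
    (hUtri : ∀ i j : Fin k, j < i → U i j = 0)
    (V : Matrix (Fin k) (Fin m) ℝ)
    (B : Matrix (Fin k) (Fin k ⊕ Fin m) ℝ)
    (hB : B = Matrix.diagonal d * Matrix.fromCols U V)
    (hdisc : DiscreteTopology
      ↥(Set.range fun a : Fin k ⊕ Fin m → ℤ => B.mulVec fun i => (a i : ℝ)))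
    (hoff : ∀ i j : Fin k, i ≠ j → ∃ q : ℚ,
      ((Matrix.fromCols U V) * (Matrix.fromCols U V).transpose) i j = q)
    (hdiag : ∀ i : Fin k, ∃ q : ℚ, (B * B.transpose) i i = q) :
    ∀ p q : Fin k ⊕ Fin m, ∃ r : ℚ, (B.transpose * B) p q = r := by
  classical
  -- Step 1: discreteness gives rational coefficients
  have hdisc2 : DiscreteTopology (span ℤ (Set.range Bᵀ) : Submodule ℤ (Fin k → ℝ)) := by
    rw [intRange_eq_span] at hdisc
    exact hdisc
  have hdetU : U.det = 1 := by
    rw [Matrix.det_of_upperTriangular (fun a b h => hUtri a b h)]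
    exact Finset.prod_eq_one fun a _ => hU1 a
  have hAunit : IsUnit (Matrix.diagonal d * U) := by
    rw [Matrix.isUnit_iff_isUnit_det, Matrix.det_mul, Matrix.det_diagonal, hdetU, mul_one,
      isUnit_iff_ne_zero]
    exact (Finset.prod_pos fun i _ => hd i).ne'
  have hBinl : ∀ i : Fin k, Bᵀ (Sum.inl i) = (Matrix.diagonal d * U)ᵀ i := by
    intro i
    funext p
    rw [Matrix.transpose_apply, Matrix.transpose_apply, hB, Matrix.diagonal_mul,
      Matrix.diagonal_mul, Matrix.fromCols_apply_inl]
  have hcols : ∀ i : Fin k, (Matrix.diagonal d * U)ᵀ i ∈ Set.range Bᵀ :=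
    fun i => ⟨Sum.inl i, hBinl i⟩
  have hmem := cols_mem_rat_span hk B (Matrix.diagonal d * U) hAunit hcols hdisc2
  choose c hc using fun j : Fin m =>
    (mem_span_range_iff_exists_fun ℚ).mp (hmem (Sum.inr j))
  have hVentry : ∀ (p : Fin k) (j : Fin m), V p j = ∑ i, (c j i : ℝ) * U p i := by
    intro p j
    have h := congrFun (hc j) p
    rw [Finset.sum_apply] at h
    have hR : Bᵀ (Sum.inr j) p = d p * V p j := by
      rw [Matrix.transpose_apply, hB, Matrix.diagonal_mul, Matrix.fromCols_apply_inr]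
    have hL : (∑ i, (c j i • (Matrix.diagonal d * U)ᵀ i) p)
        = d p * ∑ i, (c j i : ℝ) * U p i := by
      rw [Finset.mul_sum]
      refine Finset.sum_congr rfl fun i _ => ?_
      rw [Pi.smul_apply, Matrix.transpose_apply, Matrix.diagonal_mul, Rat.smul_def]
      ring
    rw [hL, hR] at h
    exact (mul_left_cancel₀ (hd p).ne' h).symm
  set Cq : Matrix (Fin k) (Fin m) ℚ := Matrix.of fun i j => c j i with hCqdef
  set Cc : Matrix (Fin k) (Fin m) ℝ := Cq.map (Rat.cast : ℚ → ℝ) with hCcdef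
  have hV : V = U * Cc := by
    ext p j
    rw [Matrix.mul_apply, hVentry p j]
    exact Finset.sum_congr rfl fun i _ => by
      simp only [hCcdef, hCqdef, Matrix.map_apply, Matrix.of_apply]
      ring
  -- Step 2: the Gram identity for rows
  have hScast : (((1 + Cq * Cqᵀ) : Matrix (Fin k) (Fin k) ℚ).map (Rat.cast : ℚ → ℝ))
      = 1 + Cc * Ccᵀ := by
    ext a b
    simp only [Matrix.map_apply, Matrix.add_apply, Matrix.mul_apply, Matrix.one_apply,
      Matrix.transpose_apply, hCcdef]
    push_cast [apply_ite (Rat.cast : ℚ → ℝ)]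
    rfl
  have hM : Matrix.fromCols U V * (Matrix.fromCols U V)ᵀ
      = U * (((1 + Cq * Cqᵀ) : Matrix (Fin k) (Fin k) ℚ).map (Rat.cast : ℚ → ℝ)) * Uᵀ := by
    rw [hScast, Matrix.transpose_fromCols, Matrix.fromCols_mul_fromRows, hV,
      Matrix.transpose_mul, Matrix.mul_add, Matrix.mul_one, Matrix.add_mul]
    congr 1
    simp only [Matrix.mul_assoc]
  have hoff' : ∀ i j : Fin k, i ≠ j → ∃ q : ℚ,
      (U * (((1 + Cq * Cqᵀ) : Matrix (Fin k) (Fin k) ℚ).map (Rat.cast : ℚ → ℝ)) * Uᵀ) i j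
        = (q : ℝ) := by
    intro i j hij
    rw [← hM]
    exact hoff i j hij
  -- Step 3: U has rational entries
  have hUrat := U_entries_rat U hU1 hUtri Cq hoff'
  choose Uq hUq using hUrat
  -- Step 4: the squares of the diagonal entries are rational
  set FUVq : Matrix (Fin k) (Fin k ⊕ Fin m) ℚ :=
    Matrix.fromCols (Matrix.of Uq) (Matrix.of Uq * Cq) with hFUVqdef
  have hFUVe : ∀ (a : Fin k) (t : Fin k ⊕ Fin m),
      Matrix.fromCols U V a t = ((FUVq a t : ℚ) : ℝ) := by
    intro a t
    rcases t with t | t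
    · rw [Matrix.fromCols_apply_inl, hFUVqdef, Matrix.fromCols_apply_inl, ← hUq]
      rfl
    · rw [Matrix.fromCols_apply_inr, hFUVqdef, Matrix.fromCols_apply_inr, hV]
      rw [Matrix.mul_apply]
      push_cast [Matrix.mul_apply]
      refine Finset.sum_congr rfl fun l _ => ?_
      rw [← hUq]
      simp [hCcdef]
  set Nq : Fin k → ℚ := fun i => ∑ t, FUVq i t * FUVq i t with hNqdef
  have hBentry : ∀ (a : Fin k) (t : Fin k ⊕ Fin m), B a t = d a * ((FUVq a t : ℚ) : ℝ) := by
    intro a t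
    rw [hB, Matrix.diagonal_mul, hFUVe]
  have hBB : ∀ i : Fin k, (B * Bᵀ) i i = d i ^ 2 * ((Nq i : ℚ) : ℝ) := by
    intro i
    rw [Matrix.mul_apply]
    have : ∀ t, B i t * Bᵀ t i = d i ^ 2 * (((FUVq i t * FUVq i t : ℚ) : ℚ) : ℝ) := by
      intro t
      rw [Matrix.transpose_apply, hBentry]
      push_cast
      ring
    rw [Finset.sum_congr rfl fun t _ => this t, ← Finset.mul_sum, hNqdef]
    push_cast
    ring
  have hNqpos : ∀ i, 0 < Nq i := by
    intro i
    have h1 : FUVq i (Sum.inl i) = 1 := by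
      have : ((FUVq i (Sum.inl i) : ℚ) : ℝ) = ((1 : ℚ) : ℝ) := by
        rw [← hFUVe, Matrix.fromCols_apply_inl, hU1, Rat.cast_one]
      exact_mod_cast this
    have h2 : (1 : ℚ) ≤ Nq i := by
      rw [hNqdef]
      calc (1 : ℚ) = FUVq i (Sum.inl i) * FUVq i (Sum.inl i) := by rw [h1]; ring
        _ ≤ ∑ t, FUVq i t * FUVq i t :=
          Finset.single_le_sum (f := fun t => FUVq i t * FUVq i t)
            (fun t _ => mul_self_nonneg _) (Finset.mem_univ _)
    linarith
  choose qd hqd using hdiag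
  set dsq : Fin k → ℚ := fun i => qd i / Nq i with hdsqdef
  have hdsq : ∀ i, ((dsq i : ℚ) : ℝ) = d i ^ 2 := by
    intro i
    have h1 := hqd i
    rw [hBB] at h1
    have hne : ((Nq i : ℚ) : ℝ) ≠ 0 := by
      exact_mod_cast (hNqpos i).ne'
    rw [hdsqdef]
    push_cast
    field_simp
    linarith [h1]
  -- Step 5: conclusion
  intro p q
  refine ⟨∑ t, dsq t * FUVq t p * FUVq t q, ?_⟩
  rw [Matrix.mul_apply]
  have : ∀ t, Bᵀ p t * B t q = ((dsq t * FUVq t p * FUVq t q : ℚ) : ℝ) := by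
    intro t
    rw [Matrix.transpose_apply, hBentry, hBentry]
    push_cast
    rw [hdsq]
    ring
  rw [Finset.sum_congr rfl fun t _ => this t]
  push_cast
  rfl
end

section
/- Let k ≤ n and let B be a k×n real matrix whose columns span ℝ^k and satisfy B·Bᵀ = I_k (a Parseval tight frame). Then the additive subgroup B(ℤ^n) = {B·a : a ∈ ℤ^n} of ℝ^k is discrete if and only if the Gram matrix Bᵀ·B has all entries in ℚ (equivalently, all pairwise inner products of the columns of B are rational). -/
open Matrix in
private lemma stmt3_aux_fw (k n : ℕ) (B : Matrix (Fin k) (Fin n) ℝ)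
    (M : Matrix (Fin k) (Fin k) ℝ) [Invertible M]
    (Ci : Matrix (Fin k) (Fin n) ℤ)
    (hBMC : B = M * Ci.map (Int.cast : ℤ → ℝ))
    (hParseval : B * B.transpose = 1) :
    ∀ i j : Fin n, ∃ q : ℚ, (B.transpose * B) i j = q := by
  classical
  set ρ : ℚ →+* ℝ := Rat.castHom ℝ with hρ
  set Cr : Matrix (Fin k) (Fin n) ℝ := Ci.map (Int.cast : ℤ → ℝ) with hCr
  set A : Matrix (Fin k) (Fin k) ℝ := Cr * Cr.transpose with hA
  haveI : Invertible M.transpose := Matrix.invertibleTranspose M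
  have h1 : M * A * M.transpose = 1 := by
    rw [hBMC] at hParseval
    rw [hA, ← hParseval, Matrix.transpose_mul]
    simp [Matrix.mul_assoc]
  have hAeq : A = ⅟M * ⅟M.transpose := by
    have h2 : ⅟M * (M * A * M.transpose) * ⅟M.transpose = A := by
      rw [← mul_assoc, ← mul_assoc, invOf_mul_self, one_mul, mul_assoc,
        mul_invOf_self, mul_one]
    rw [← h2, h1, mul_one]
  haveI : Invertible A :=
    Invertible.copy (invertibleMul (⅟M) (⅟M.transpose)) A hAeq
  have hinvA : ⅟A = M.transpose * M := by
    apply invOf_eq_right_inv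
    rw [hAeq, mul_assoc, ← mul_assoc (⅟M.transpose), invOf_mul_self, one_mul,
      invOf_mul_self]
  have hG : B.transpose * B = Cr.transpose * ⅟A * Cr := by
    rw [hBMC, Matrix.transpose_mul, hinvA]
    simp [Matrix.mul_assoc]
  -- rational side
  set Cq : Matrix (Fin k) (Fin n) ℚ := Ci.map (Int.cast : ℤ → ℚ) with hCq
  set Aq : Matrix (Fin k) (Fin k) ℚ := Cq * Cq.transpose with hAq
  have hCrq : Cr = Cq.map ρ := by
    rw [hCr, hCq, Matrix.map_map]
    congr 1
  have hAmap : A = Aq.map ρ := by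
    rw [hA, hAq, hCrq, ← Matrix.transpose_map, ← Matrix.map_mul]
  have hdet : Aq.det ≠ 0 := by
    intro h
    have hAd : A.det = ρ Aq.det := by
      rw [hAmap]
      exact (RingHom.map_det ρ Aq).symm
    have h0 : A.det = 0 := by rw [hAd, h]; simp
    have := A.isUnit_det_of_invertible
    rw [h0] at this
    simp at this
  haveI : Invertible Aq := Aq.invertibleOfIsUnitDet (isUnit_iff_ne_zero.mpr hdet)
  have hinvmap : ⅟A = (⅟Aq).map ρ := by
    apply invOf_eq_right_inv
    rw [hAmap, ← Matrix.map_mul, mul_invOf_self]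
    simp
  have hG2 : B.transpose * B = (Cq.transpose * ⅟Aq * Cq).map ρ := by
    rw [hG, hinvmap, hCrq, ← Matrix.transpose_map, ← Matrix.map_mul, ← Matrix.map_mul]
  intro i j
  refine ⟨(Cq.transpose * ⅟Aq * Cq) i j, ?_⟩
  rw [hG2]
  simp [Matrix.map_apply, hρ]

open Matrix in
private lemma stmt3_aux_bw (k n : ℕ) (B : Matrix (Fin k) (Fin n) ℝ)
    (hrat : ∀ i j : Fin n, ∃ q : ℚ, (B.transpose * B) i j = q) :
    DiscreteTopology ↥(Set.range fun a : Fin n → ℤ => B.mulVec fun i => (a i : ℝ)) := by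
  classical
  set S := Set.range fun a : Fin n → ℤ => B.mulVec fun i => (a i : ℝ) with hS
  choose q hq using hrat
  set D : ℕ := ∏ p : Fin n × Fin n, (q p.1 p.2).den with hD
  have hDpos : 0 < D := Finset.prod_pos fun p _ => (q p.1 p.2).pos
  have hDQ : ((D : ℚ)) ≠ 0 := by exact_mod_cast hDpos.ne'
  have hDR : ((D : ℝ)) ≠ 0 := by exact_mod_cast hDpos.ne'
  have hden : ∀ i j, ((q i j).den : ℤ) ∣ (D : ℤ) := by
    intro i j
    exact_mod_cast Int.natCast_dvd_natCast.mpr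
      (Finset.dvd_prod_of_mem (fun p : Fin n × Fin n => (q p.1 p.2).den)
        (Finset.mem_univ (i, j)))
  set z : Fin n → Fin n → ℤ := fun i j => (q i j).num * ((D : ℤ) / (q i j).den) with hz
  have hqz : ∀ i j, q i j = (z i j : ℚ) / (D : ℚ) := by
    intro i j
    obtain ⟨m, hm⟩ := hden i j
    have hden0 : ((q i j).den : ℤ) ≠ 0 := by exact_mod_cast (q i j).den_nz
    rw [eq_div_iff hDQ]
    show q i j * (D:ℚ) = (((q i j).num * ((D : ℤ) / (q i j).den) : ℤ) : ℚ)
    have hdiv : (D : ℤ) / ((q i j).den : ℤ) = m := by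
      rw [hm, Int.mul_ediv_cancel_left _ hden0]
    have hden0Q : ((q i j).den : ℚ) ≠ 0 := by exact_mod_cast (q i j).den_nz
    have hnum : ((q i j).num : ℚ) = q i j * ((q i j).den : ℚ) :=
      (div_eq_iff hden0Q).mp (Rat.num_div_den (q i j))
    have hDm : (D : ℚ) = ((q i j).den : ℚ) * (m : ℚ) := by
      exact_mod_cast congrArg (Int.cast : ℤ → ℚ) hm
    rw [hdiv]
    push_cast
    rw [hnum, hDm]
    ring
  have hentry : ∀ i j, (B.transpose * B) i j = (z i j : ℝ) / (D : ℝ) := by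
    intro i j
    rw [hq i j, hqz i j]
    push_cast
    ring
  -- dot product formula
  have key : ∀ c : Fin n → ℝ, B.mulVec c ⬝ᵥ B.mulVec c
      = ∑ i, ∑ j, c i * c j * (B.transpose * B) i j := by
    intro c
    simp only [dotProduct, Matrix.mulVec, Matrix.mul_apply, Matrix.transpose_apply,
      Finset.mul_sum, Finset.sum_mul]
    rw [Finset.sum_comm]
    refine Finset.sum_congr rfl fun i _ => ?_
    rw [Finset.sum_comm]
    exact Finset.sum_congr rfl fun j _ => Finset.sum_congr rfl fun t _ => by ring
  -- value of the quadratic form on integer vectors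
  have hval : ∀ a : Fin n → ℤ, ∃ N : ℤ,
      (B.mulVec fun i => (a i : ℝ)) ⬝ᵥ (B.mulVec fun i => (a i : ℝ)) = (N : ℝ) / (D : ℝ) := by
    intro a
    refine ⟨∑ i, ∑ j, a i * a j * z i j, ?_⟩
    rw [key]
    push_cast
    rw [Finset.sum_div]
    refine Finset.sum_congr rfl fun i _ => ?_
    rw [Finset.sum_div]
    refine Finset.sum_congr rfl fun j _ => ?_
    rw [hentry]
    ring
  -- separation: nonzero lattice vectors have squared norm ≥ 1/D
  have hsep : ∀ x ∈ S, x ≠ 0 → (1 : ℝ) / (D : ℝ) ≤ x ⬝ᵥ x := by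
    rintro x ⟨a, rfl⟩ hx
    obtain ⟨N, hN⟩ := hval a
    have hxx : (0 : ℝ) < (B.mulVec fun i => (a i : ℝ)) ⬝ᵥ (B.mulVec fun i => (a i : ℝ)) := by
      obtain ⟨t, ht⟩ : ∃ t, (B.mulVec fun i => (a i : ℝ)) t ≠ 0 := by
        by_contra h
        push_neg at h
        exact hx (funext h)
      have : (0:ℝ) < ∑ t, (B.mulVec fun i => (a i : ℝ)) t * (B.mulVec fun i => (a i : ℝ)) t := by
        refine Finset.sum_pos' (fun t _ => mul_self_nonneg _) ⟨t, Finset.mem_univ t, ?_⟩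
        exact mul_self_pos.mpr ht
      exact this
    have hNpos : 0 < N := by
      by_contra h
      push_neg at h
      have : (N : ℝ) / (D : ℝ) ≤ 0 := by
        apply div_nonpos_of_nonpos_of_nonneg
        · exact_mod_cast h
        · positivity
      rw [hN] at hxx; linarith
    rw [hN]
    have h1N : (1:ℝ) ≤ (N:ℝ) := by exact_mod_cast hNpos
    gcongr
  -- points of S are pairwise separated
  set ε : ℝ := Real.sqrt (1 / ((D : ℝ) * (k + 1))) with hε
  have hbpos : (0:ℝ) < 1 / ((D : ℝ) * (k + 1)) := by positivity
  have hεpos : 0 < ε := Real.sqrt_pos.mpr hbpos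
  have hsub : ∀ x ∈ S, ∀ y ∈ S, x - y ∈ S := by
    rintro _ ⟨a, rfl⟩ _ ⟨b, rfl⟩
    refine ⟨a - b, ?_⟩
    have hcast : (fun i => ((a - b) i : ℝ)) = (fun i => (a i : ℝ)) - fun i => (b i : ℝ) := by
      funext i; simp
    show B.mulVec (fun i => ((a - b) i : ℝ)) = _
    rw [hcast, Matrix.mulVec_sub]
  have hdist : ∀ x ∈ S, ∀ y ∈ S, x ≠ y → ε ≤ dist x y := by
    intro x hx y hy hne
    by_contra hcon
    push_neg at hcon
    have hxy : x - y ∈ S := hsub x hx y hy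
    have hne0 : x - y ≠ 0 := sub_ne_zero_of_ne hne
    have hlow := hsep _ hxy hne0
    have hcoord : ∀ t, (x t - y t) ^ 2 ≤ 1 / ((D : ℝ) * (k + 1)) := by
      intro t
      have h1 : |x t - y t| ≤ dist x y := by
        rw [← Real.dist_eq]
        exact dist_le_pi_dist x y t
      have h2 : |x t - y t| ≤ ε := h1.trans hcon.le
      calc (x t - y t) ^ 2 = |x t - y t| ^ 2 := (sq_abs _).symm
        _ ≤ ε ^ 2 := pow_le_pow_left₀ (abs_nonneg _) h2 2
        _ = 1 / ((D : ℝ) * (k + 1)) := Real.sq_sqrt hbpos.le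
    have hub : (x - y) ⬝ᵥ (x - y) ≤ (k : ℝ) * (1 / ((D : ℝ) * (k + 1))) := by
      have : (x - y) ⬝ᵥ (x - y) = ∑ t, (x t - y t) ^ 2 := by
        simp [dotProduct, sq]
      rw [this]
      calc ∑ t, (x t - y t) ^ 2 ≤ ∑ _t : Fin k, 1 / ((D : ℝ) * (k + 1)) :=
            Finset.sum_le_sum fun t _ => hcoord t
        _ = (k : ℝ) * (1 / ((D : ℝ) * (k + 1))) := by
            simp [Finset.sum_const, mul_comm]
    have hlt : (k : ℝ) * (1 / ((D : ℝ) * (k + 1))) < 1 / (D : ℝ) := by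
      rw [mul_one_div, div_lt_div_iff₀ (by positivity) (by positivity)]
      have : (0:ℝ) < D := by exact_mod_cast hDpos
      nlinarith
    linarith
  rw [discreteTopology_iff_isOpen_singleton]
  intro p
  have hset2 : ({p} : Set ↥S) = (Subtype.val : ↥S → (Fin k → ℝ)) ⁻¹'
      Metric.ball (p : Fin k → ℝ) ε := by
    ext y
    simp only [Set.mem_singleton_iff, Set.mem_preimage, Metric.mem_ball]
    constructor
    · rintro rfl
      simpa using hεpos
    · intro hlt2
      by_contra hne
      have hne' : (y : Fin k → ℝ) ≠ (p : Fin k → ℝ) := fun hh => hne (Subtype.ext hh)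
      exact absurd hlt2 (not_lt.mpr (hdist _ y.2 _ p.2 hne'))
  rw [hset2]
  exact Metric.isOpen_ball.preimage continuous_subtype_val

/-- For a Parseval tight frame (columns of `B` with `B * Bᵀ = 1` spanning `ℝ^k`),
the integer span of the columns is discrete if and only if the Gram matrix `Bᵀ * B`
has rational entries. -/
theorem stmt_3 (k n : ℕ) (hkn : k ≤ n) (B : Matrix (Fin k) (Fin n) ℝ)
    (hspan : Submodule.span ℝ (Set.range fun j : Fin n => fun i : Fin k => B i j) = ⊤)
    (hParseval : B * B.transpose = 1) :
    DiscreteTopology ↥(Set.range fun a : Fin n → ℤ => B.mulVec fun i => (a i : ℝ))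
      ↔ ∀ i j : Fin n, ∃ q : ℚ, (B.transpose * B) i j = q := by
  classical
  set φ : (Fin n → ℤ) →ₗ[ℤ] (Fin k → ℝ) := AddMonoidHom.toIntLinearMap
    { toFun := fun a => B.mulVec fun i => (a i : ℝ)
      map_zero' := by
        show B.mulVec (fun i => ((0 : Fin n → ℤ) i : ℝ)) = 0
        have : (fun i => ((0 : Fin n → ℤ) i : ℝ)) = 0 := by funext i; simp
        rw [this, Matrix.mulVec_zero]
      map_add' := fun a b => by
        show B.mulVec (fun i => ((a + b) i : ℝ)) = _
        have : (fun i => ((a + b) i : ℝ)) = (fun i => (a i : ℝ)) + fun i => (b i : ℝ) := by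
          funext i; simp
        rw [this, Matrix.mulVec_add] } with hφdef
  have hφ : ∀ a, φ a = B.mulVec fun i => (a i : ℝ) := fun a => rfl
  set L : Submodule ℤ (Fin k → ℝ) := LinearMap.range φ with hLdef
  have hLset : (L : Set (Fin k → ℝ))
      = Set.range fun a : Fin n → ℤ => B.mulVec fun i => (a i : ℝ) := by
    ext x; simp [hLdef, LinearMap.mem_range, hφ]
  have hcol : ∀ j : Fin n, (fun i : Fin k => B i j) ∈ L := by
    intro j
    refine ⟨Pi.single j 1, ?_⟩
    rw [hφ]; funext i
    simp [Matrix.mulVec, dotProduct, Pi.single_apply, mul_ite]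
  have hspanL : Submodule.span ℝ (L : Set (Fin k → ℝ)) = ⊤ := by
    rw [eq_top_iff, ← hspan]
    exact Submodule.span_mono (Set.range_subset_iff.mpr hcol)
  rw [← hLset]
  constructor
  · intro hdis
    haveI : DiscreteTopology L := hdis
    haveI : IsZLattice ℝ L := ⟨hspanL⟩
    haveI : Module.Free ℤ L := ZLattice.module_free ℝ L
    haveI : Module.Finite ℤ L := ZLattice.module_finite ℝ L
    set b0 := Module.Free.chooseBasis ℤ L
    have hcard : Fintype.card (Module.Free.ChooseBasisIndex ℤ L) = k := by
      rw [← Module.finrank_eq_card_chooseBasisIndex, ZLattice.rank ℝ L]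
      simp
    set e := Fintype.equivFinOfCardEq hcard
    set b : Module.Basis (Fin k) ℤ L := b0.reindex e with hb
    set bE : Module.Basis (Fin k) ℝ (Fin k → ℝ) := b.ofZLatticeBasis ℝ L with hbE
    set M : Matrix (Fin k) (Fin k) ℝ := (Pi.basisFun ℝ (Fin k)).toMatrix bE with hM
    haveI : Invertible M := (Pi.basisFun ℝ (Fin k)).invertibleToMatrix bE
    have hMapp : ∀ i l, M i l = bE l i := by
      intro i l; simp [hM, Module.Basis.toMatrix_apply]
    set Ci : Matrix (Fin k) (Fin n) ℤ := fun l j => b.repr ⟨_, hcol j⟩ l with hCi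
    set Cr : Matrix (Fin k) (Fin n) ℝ := Ci.map (Int.cast : ℤ → ℝ) with hCr
    have hCrapp : ∀ l j, Cr l j = bE.repr (fun i : Fin k => B i j) l := by
      intro l j
      rw [hCr]
      have := Module.Basis.ofZLatticeBasis_repr_apply ℝ L b ⟨_, hcol j⟩ l
      simp only [Matrix.map_apply, hCi]
      rw [← hbE] at this
      exact_mod_cast this.symm
    have hBMC : B = M * Cr := by
      ext i j
      have := bE.sum_repr (fun i : Fin k => B i j)
      have h2 := congrFun this i
      simp only [Finset.sum_apply, Pi.smul_apply, smul_eq_mul] at h2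
      rw [Matrix.mul_apply]
      rw [← h2]
      refine Finset.sum_congr rfl fun l _ => ?_
      rw [hMapp, hCrapp, mul_comm]
    exact stmt3_aux_fw k n B M Ci hBMC hParseval
  · intro hrat
    have := stmt3_aux_bw k n B hrat
    rwa [hLset]
end

section
/- Let A₁ and A₂ be the adjacency matrices of finite simple graphs Δ₁ on m₁ vertices and Δ₂ on m₂ vertices, and let Γ = Δ₁ □ Δ₂ be their Cartesian product with adjacency matrix A_Γ = A₁ ⊗ I_{m₂} + I_{m₁} ⊗ A₂. Let ν be an eigenvalue of A_Γ such that there is a UNIQUE pair (λ, μ) of eigenvalues of A₁ and A₂ with λ + μ = ν, λ, μ ∈ ℚ. Let P, Q be the orthogonal projections onto the λ-eigenspace of A₁ and the μ-eigenspace of A₂ respectively. Then the orthogonal projection onto the ν-eigenspace of A_Γ is P ⊗ Q, and the lattice L_{Γ,ν} = (P ⊗ Q)(ℤ^{m₁m₂}) equals the ℤ-span of the set of Kronecker products {x ⊗ y : x ∈ P(ℤ^{m₁}), y ∈ Q(ℤ^{m₂})}; that is, L_{Γ,ν} = L_{Δ₁,λ} ⊗_ℤ L_{Δ₂,μ}.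 -/
open Kronecker

private lemma kronAux_mulVec {l m p q : Type*} [Fintype m] [Fintype q]
    (M : Matrix l m ℝ) (N : Matrix p q ℝ) (u : m → ℝ) (w : q → ℝ) :
    (M ⊗ₖ N).mulVec (fun r => u r.1 * w r.2) =
      fun r => M.mulVec u r.1 * N.mulVec w r.2 := by
  funext r
  have h1 : (M ⊗ₖ N).mulVec (fun r => u r.1 * w r.2) r
      = ∑ i, ∑ j, (M r.1 i * u i) * (N r.2 j * w j) := by
    simp only [Matrix.mulVec, dotProduct, Matrix.kroneckerMap_apply,
      Fintype.sum_prod_type]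
    exact Finset.sum_congr rfl fun i _ => Finset.sum_congr rfl fun j _ => by ring
  rw [h1, ← Finset.sum_mul_sum]
  rfl

private lemma matAux_eq_zero {m n : Type*} [Fintype n] [DecidableEq n]
    (M : Matrix m n ℝ) (h : ∀ x, M.mulVec x = 0) : M = 0 := by
  ext i j
  have := congrFun (h (Pi.single j 1)) i
  simpa [Matrix.mulVec_single] using this

private lemma specAux {m : ℕ} (A : Matrix (Fin m) (Fin m) ℝ) (hH : A.IsHermitian) :
    A * (hH.eigenvectorUnitary : Matrix (Fin m) (Fin m) ℝ)
      = (hH.eigenvectorUnitary : Matrix (Fin m) (Fin m) ℝ)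
        * Matrix.diagonal hH.eigenvalues := by
  have h := hH.spectral_theorem
  have hd : Matrix.diagonal (RCLike.ofReal ∘ hH.eigenvalues)
      = Matrix.diagonal hH.eigenvalues := by simp [Function.comp]
  nth_rewrite 1 [h]
  rw [Unitary.conjStarAlgAut_apply, hd, mul_assoc, mul_assoc, Unitary.coe_star_mul_self, mul_one]

private lemma evecAux_ne {m : ℕ} (A : Matrix (Fin m) (Fin m) ℝ) (hH : A.IsHermitian)
    (j : Fin m) : (⇑(hH.eigenvectorBasis j) : Fin m → ℝ) ≠ 0 := by
  intro h
  have h0 : hH.eigenvectorBasis j = 0 := by ext i; exact congrFun h i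
  exact hH.eigenvectorBasis.toBasis.ne_zero j (by simpa using h0)

/-- For the Cartesian product graph `Γ = Δ₁ □ Δ₂` and an eigenvalue `ν = λ + μ` of
`A_Γ = A₁ ⊗ I + I ⊗ A₂` arising from a UNIQUE pair `(λ, μ)` of (rational) eigenvalues
of `A₁, A₂`, the orthogonal projection onto the `ν`-eigenspace is `P ⊗ₖ Q`, and the
lattice `(P ⊗ₖ Q)(ℤ^{m₁m₂})` equals the `ℤ`-span of the Kronecker products `x ⊗ y`
with `x ∈ P(ℤ^{m₁})`, `y ∈ Q(ℤ^{m₂})`, i.e. `L_{Γ,ν} = L_{Δ₁,λ} ⊗_ℤ L_{Δ₂,μ}`. -/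
theorem stmt_13 (m₁ m₂ : ℕ)
    (Δ₁ : SimpleGraph (Fin m₁)) [DecidableRel Δ₁.Adj]
    (Δ₂ : SimpleGraph (Fin m₂)) [DecidableRel Δ₂.Adj]
    (A₁ : Matrix (Fin m₁) (Fin m₁) ℝ) (hA₁ : A₁ = Δ₁.adjMatrix ℝ)
    (A₂ : Matrix (Fin m₂) (Fin m₂) ℝ) (hA₂ : A₂ = Δ₂.adjMatrix ℝ)
    (AΓ : Matrix (Fin m₁ × Fin m₂) (Fin m₁ × Fin m₂) ℝ)
    (hAΓ : AΓ = A₁ ⊗ₖ (1 : Matrix (Fin m₂) (Fin m₂) ℝ)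
      + (1 : Matrix (Fin m₁) (Fin m₁) ℝ) ⊗ₖ A₂)
    (lam mu : ℚ) (ν : ℝ) (hν : ν = (lam : ℝ) + (mu : ℝ))
    (hlam : ∃ x : Fin m₁ → ℝ, x ≠ 0 ∧ A₁.mulVec x = (lam : ℝ) • x)
    (hmu : ∃ y : Fin m₂ → ℝ, y ≠ 0 ∧ A₂.mulVec y = (mu : ℝ) • y)
    (hνeig : ∃ z : Fin m₁ × Fin m₂ → ℝ, z ≠ 0 ∧ AΓ.mulVec z = ν • z)
    (hunique : ∀ a b : ℝ, (∃ x : Fin m₁ → ℝ, x ≠ 0 ∧ A₁.mulVec x = a • x) →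
      (∃ y : Fin m₂ → ℝ, y ≠ 0 ∧ A₂.mulVec y = b • y) → a + b = ν →
      a = (lam : ℝ) ∧ b = (mu : ℝ))
    (V : Submodule ℝ (Fin m₁ → ℝ))
    (hV : V = LinearMap.ker
      (Matrix.toLin' (A₁ - (lam : ℝ) • (1 : Matrix (Fin m₁) (Fin m₁) ℝ))))
    (W : Submodule ℝ (Fin m₂ → ℝ))
    (hW : W = LinearMap.ker
      (Matrix.toLin' (A₂ - (mu : ℝ) • (1 : Matrix (Fin m₂) (Fin m₂) ℝ))))
    (U : Submodule ℝ (Fin m₁ × Fin m₂ → ℝ))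
    (hU : U = LinearMap.ker
      (Matrix.toLin' (AΓ - ν • (1 : Matrix (Fin m₁ × Fin m₂) (Fin m₁ × Fin m₂) ℝ))))
    (P : Matrix (Fin m₁) (Fin m₁) ℝ)
    (hPsymm : P.transpose = P) (hPidem : P * P = P)
    (hPrange : ∀ x, P.mulVec x ∈ V) (hPfix : ∀ x ∈ V, P.mulVec x = x)
    (Q : Matrix (Fin m₂) (Fin m₂) ℝ)
    (hQsymm : Q.transpose = Q) (hQidem : Q * Q = Q)
    (hQrange : ∀ y, Q.mulVec y ∈ W) (hQfix : ∀ y ∈ W, Q.mulVec y = y)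
    (LP : Set (Fin m₁ → ℝ))
    (hLP : LP = Set.range fun a : Fin m₁ → ℤ => P.mulVec fun i => (a i : ℝ))
    (LQ : Set (Fin m₂ → ℝ))
    (hLQ : LQ = Set.range fun a : Fin m₂ → ℤ => Q.mulVec fun i => (a i : ℝ)) :
    ((P ⊗ₖ Q).transpose = P ⊗ₖ Q) ∧ ((P ⊗ₖ Q) * (P ⊗ₖ Q) = P ⊗ₖ Q) ∧
    (∀ z, (P ⊗ₖ Q).mulVec z ∈ U) ∧ (∀ z ∈ U, (P ⊗ₖ Q).mulVec z = z) ∧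
    (Set.range fun a : Fin m₁ × Fin m₂ → ℤ => (P ⊗ₖ Q).mulVec fun p => (a p : ℝ))
      = (AddSubgroup.closure
          {z : Fin m₁ × Fin m₂ → ℝ | ∃ x ∈ LP, ∃ y ∈ LQ, z = fun p => x p.1 * y p.2}
          : AddSubgroup (Fin m₁ × Fin m₂ → ℝ)) := by
  -- Hermitian-ness of the adjacency matrices
  have hH₁ : A₁.IsHermitian := by
    subst hA₁; ext i j; simp [Matrix.conjTranspose_apply, SimpleGraph.adj_comm]
  have hH₂ : A₂.IsHermitian := by
    subst hA₂; ext i j; simp [Matrix.conjTranspose_apply, SimpleGraph.adj_comm]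
  -- A₁ * P = lam • P and A₂ * Q = mu • Q
  have hAP : A₁ * P = (lam : ℝ) • P := by
    have h0 : (A₁ - (lam : ℝ) • 1) * P = 0 := by
      apply matAux_eq_zero
      intro x
      have hx := hPrange x
      rw [hV, LinearMap.mem_ker, Matrix.toLin'_apply] at hx
      rw [← Matrix.mulVec_mulVec]
      exact hx
    rw [sub_mul, Matrix.smul_mul, one_mul, sub_eq_zero] at h0
    exact h0
  have hAQ : A₂ * Q = (mu : ℝ) • Q := by
    have h0 : (A₂ - (mu : ℝ) • 1) * Q = 0 := by
      apply matAux_eq_zero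
      intro y
      have hy := hQrange y
      rw [hW, LinearMap.mem_ker, Matrix.toLin'_apply] at hy
      rw [← Matrix.mulVec_mulVec]
      exact hy
    rw [sub_mul, Matrix.smul_mul, one_mul, sub_eq_zero] at h0
    exact h0
  have hAPQ : AΓ * (P ⊗ₖ Q) = ν • (P ⊗ₖ Q) := by
    rw [hAΓ, add_mul, ← Matrix.mul_kronecker_mul, ← Matrix.mul_kronecker_mul,
      one_mul, one_mul, hAP, hAQ, Matrix.smul_kronecker, Matrix.kronecker_smul,
      hν, add_smul]
  refine ⟨?_, ?_, ?_, ?_, ?_⟩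
  · rw [← Matrix.kroneckerMap_transpose, hPsymm, hQsymm]
  · rw [← Matrix.mul_kronecker_mul, hPidem, hQidem]
  · intro z
    rw [hU, LinearMap.mem_ker, Matrix.toLin'_apply, Matrix.mulVec_mulVec,
      sub_mul, hAPQ, Matrix.smul_mul, one_mul, sub_self, Matrix.zero_mulVec]
  · -- the hard part
    intro z hz
    rw [hU, LinearMap.mem_ker, Matrix.toLin'_apply] at hz
    have hz' : AΓ.mulVec z = ν • z := by
      rwa [Matrix.sub_mulVec, Matrix.smul_mulVec, Matrix.one_mulVec,
        sub_eq_zero] at hz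
    set U₁ : Matrix (Fin m₁) (Fin m₁) ℝ := (↑hH₁.eigenvectorUnitary : Matrix (Fin m₁) (Fin m₁) ℝ) with hU₁def
    set U₂ : Matrix (Fin m₂) (Fin m₂) ℝ := (↑hH₂.eigenvectorUnitary : Matrix (Fin m₂) (Fin m₂) ℝ) with hU₂def
    set e₁ := hH₁.eigenvalues
    set e₂ := hH₂.eigenvalues
    have hU1 : A₁ * U₁ = U₁ * Matrix.diagonal e₁ := specAux A₁ hH₁
    have hU2 : A₂ * U₂ = U₂ * Matrix.diagonal e₂ := specAux A₂ hH₂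
    set K := U₁ ⊗ₖ U₂ with hKdef
    set K' := (star U₁) ⊗ₖ (star U₂) with hK'def
    have hK'K : K' * K = 1 := by
      rw [hK'def, hKdef, ← Matrix.mul_kronecker_mul, Unitary.coe_star_mul_self,
        Unitary.coe_star_mul_self, Matrix.one_kronecker_one]
    have hKK' : K * K' = 1 := mul_eq_one_comm.mp hK'K
    have hD : Matrix.diagonal (fun p : Fin m₁ × Fin m₂ => e₁ p.1 + e₂ p.2)
        = (Matrix.diagonal e₁) ⊗ₖ 1 + 1 ⊗ₖ (Matrix.diagonal e₂) := by
      rw [← Matrix.diagonal_one, ← Matrix.diagonal_one (n := Fin m₁),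
        Matrix.diagonal_kronecker_diagonal, Matrix.diagonal_kronecker_diagonal,
        Matrix.diagonal_add]
      funext p
      simp
    have hAK : AΓ * K = K * Matrix.diagonal (fun p : Fin m₁ × Fin m₂ => e₁ p.1 + e₂ p.2) := by
      rw [hAΓ, hKdef, add_mul, ← Matrix.mul_kronecker_mul, ← Matrix.mul_kronecker_mul,
        one_mul, one_mul, hU1, hU2, hD, mul_add, ← Matrix.mul_kronecker_mul,
        ← Matrix.mul_kronecker_mul, mul_one, mul_one]
    set c := K'.mulVec z with hcdef
    have hzc : z = K.mulVec c := by
      rw [hcdef, Matrix.mulVec_mulVec, hKK', Matrix.one_mulVec]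
    have hDc : (Matrix.diagonal (fun p : Fin m₁ × Fin m₂ => e₁ p.1 + e₂ p.2)).mulVec c
        = ν • c := by
      have e1 : K.mulVec ((Matrix.diagonal (fun p : Fin m₁ × Fin m₂ => e₁ p.1 + e₂ p.2)).mulVec c)
          = ν • (K.mulVec c) := by
        rw [Matrix.mulVec_mulVec, ← hAK, ← Matrix.mulVec_mulVec, ← hzc, hz', hzc]
      have e2 := congrArg K'.mulVec e1
      rw [Matrix.mulVec_mulVec, Matrix.mulVec_mulVec, hK'K, one_mul,
        Matrix.mulVec_smul] at e2
      have e3 : K'.mulVec (K.mulVec c) = c := by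
        rw [Matrix.mulVec_mulVec, hK'K, Matrix.one_mulVec]
      rw [e3] at e2
      exact e2
    have hcases : ∀ p : Fin m₁ × Fin m₂, c p ≠ 0 →
        e₁ p.1 = (lam : ℝ) ∧ e₂ p.2 = (mu : ℝ) := by
      intro p hcp
      have h1 := congrFun hDc p
      simp only [Matrix.mulVec_diagonal, Pi.smul_apply, smul_eq_mul] at h1
      have hsum : e₁ p.1 + e₂ p.2 = ν := mul_right_cancel₀ hcp h1
      exact hunique _ _
        ⟨⇑(hH₁.eigenvectorBasis p.1), evecAux_ne A₁ hH₁ p.1, hH₁.mulVec_eigenvectorBasis p.1⟩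
        ⟨⇑(hH₂.eigenvectorBasis p.2), evecAux_ne A₂ hH₂ p.2, hH₂.mulVec_eigenvectorBasis p.2⟩
        hsum
    -- columns fixed by P, Q
    have hPU : ∀ q : Fin m₁ × Fin m₂, c q ≠ 0 → ∀ i, (P * U₁) i q.1 = U₁ i q.1 := by
      intro q hq i
      have hvV : (⇑(hH₁.eigenvectorBasis q.1) : Fin m₁ → ℝ) ∈ V := by
        rw [hV, LinearMap.mem_ker, Matrix.toLin'_apply, Matrix.sub_mulVec,
          Matrix.smul_mulVec, Matrix.one_mulVec, hH₁.mulVec_eigenvectorBasis,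
          show hH₁.eigenvalues q.1 = (lam : ℝ) from (hcases q hq).1, sub_self]
      have hfix := hPfix _ hvV
      have hcol : (fun k => U₁ k q.1) = ⇑(hH₁.eigenvectorBasis q.1) := by
        funext k
        exact hH₁.eigenvectorUnitary_apply k q.1
      calc (P * U₁) i q.1 = (P.mulVec (fun k => U₁ k q.1)) i := by
            simp [Matrix.mul_apply, Matrix.mulVec, dotProduct]
        _ = U₁ i q.1 := by rw [hcol, hfix, ← hcol]
    have hQU : ∀ q : Fin m₁ × Fin m₂, c q ≠ 0 → ∀ i, (Q * U₂) i q.2 = U₂ i q.2 := by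
      intro q hq i
      have hvW : (⇑(hH₂.eigenvectorBasis q.2) : Fin m₂ → ℝ) ∈ W := by
        rw [hW, LinearMap.mem_ker, Matrix.toLin'_apply, Matrix.sub_mulVec,
          Matrix.smul_mulVec, Matrix.one_mulVec, hH₂.mulVec_eigenvectorBasis,
          show hH₂.eigenvalues q.2 = (mu : ℝ) from (hcases q hq).2, sub_self]
      have hfix := hQfix _ hvW
      have hcol : (fun k => U₂ k q.2) = ⇑(hH₂.eigenvectorBasis q.2) := by
        funext k
        exact hH₂.eigenvectorUnitary_apply k q.2
      calc (Q * U₂) i q.2 = (Q.mulVec (fun k => U₂ k q.2)) i := by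
            simp [Matrix.mul_apply, Matrix.mulVec, dotProduct]
        _ = U₂ i q.2 := by rw [hcol, hfix, ← hcol]
    rw [hzc, Matrix.mulVec_mulVec]
    funext p
    show ∑ q, ((P ⊗ₖ Q) * K) p q * c q = ∑ q, K p q * c q
    refine Finset.sum_congr rfl fun q _ => ?_
    by_cases hq : c q = 0
    · rw [hq, mul_zero, mul_zero]
    · congr 1
      rw [hKdef, ← Matrix.mul_kronecker_mul]
      show (P * U₁) p.1 q.1 * (Q * U₂) p.2 q.2 = U₁ p.1 q.1 * U₂ p.2 q.2
      rw [hPU q hq, hQU q hq]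
  · -- lattice statement
    set S : Set (Fin m₁ × Fin m₂ → ℝ) :=
      {z : Fin m₁ × Fin m₂ → ℝ | ∃ x ∈ LP, ∃ y ∈ LQ, z = fun p => x p.1 * y p.2} with hSdef
    set g : (Fin m₁ × Fin m₂ → ℤ) →+ (Fin m₁ × Fin m₂ → ℝ) :=
      AddMonoidHom.mk' (fun a => (P ⊗ₖ Q).mulVec fun p => (a p : ℝ)) (fun a b => by
        show (P ⊗ₖ Q).mulVec (fun p => ((a + b) p : ℝ))
            = (P ⊗ₖ Q).mulVec (fun p => (a p : ℝ)) + (P ⊗ₖ Q).mulVec (fun p => (b p : ℝ))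
        have h : (fun p : Fin m₁ × Fin m₂ => (((a + b) p : ℤ) : ℝ))
            = (fun p => ((a p : ℤ) : ℝ)) + (fun p => ((b p : ℤ) : ℝ)) := by
          funext p
          exact Int.cast_add (a p) (b p)
        rw [h, Matrix.mulVec_add]) with hgdef
    have hcolmem : ∀ q : Fin m₁ × Fin m₂, (P ⊗ₖ Q).mulVec (Pi.single q 1) ∈ S := by
      intro q
      have hsingle : (Pi.single q (1 : ℝ) : Fin m₁ × Fin m₂ → ℝ)
          = fun p => (Pi.single q.1 (1 : ℝ) : Fin m₁ → ℝ) p.1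
              * (Pi.single q.2 (1 : ℝ) : Fin m₂ → ℝ) p.2 := by
        funext p
        by_cases h1 : p.1 = q.1 <;> by_cases h2 : p.2 = q.2 <;>
          simp [Pi.single_apply, Prod.ext_iff, h1, h2]
      rw [hsingle, kronAux_mulVec]
      refine ⟨P.mulVec (Pi.single q.1 (1 : ℝ)), ?_, Q.mulVec (Pi.single q.2 (1 : ℝ)), ?_, rfl⟩
      · rw [hLP]
        refine ⟨Pi.single q.1 (1 : ℤ), ?_⟩
        show P.mulVec (fun i => (((Pi.single q.1 (1 : ℤ) : Fin m₁ → ℤ) i : ℤ) : ℝ))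
            = P.mulVec (Pi.single q.1 (1 : ℝ))
        have hcast : (fun i => (((Pi.single q.1 (1 : ℤ) : Fin m₁ → ℤ) i : ℤ) : ℝ))
            = (Pi.single q.1 (1 : ℝ) : Fin m₁ → ℝ) := by
          funext i
          simp [Pi.single_apply, apply_ite (fun t : ℤ => (t : ℝ))]
        rw [hcast]
      · rw [hLQ]
        refine ⟨Pi.single q.2 (1 : ℤ), ?_⟩
        show Q.mulVec (fun i => (((Pi.single q.2 (1 : ℤ) : Fin m₂ → ℤ) i : ℤ) : ℝ))
            = Q.mulVec (Pi.single q.2 (1 : ℝ))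
        have hcast : (fun i => (((Pi.single q.2 (1 : ℤ) : Fin m₂ → ℤ) i : ℤ) : ℝ))
            = (Pi.single q.2 (1 : ℝ) : Fin m₂ → ℝ) := by
          funext i
          simp [Pi.single_apply, apply_ite (fun t : ℤ => (t : ℝ))]
        rw [hcast]
    apply Set.Subset.antisymm
    · rintro _ ⟨a, rfl⟩
      show (P ⊗ₖ Q).mulVec (fun p => (a p : ℝ)) ∈ AddSubgroup.closure S
      have h1 : ∀ q : Fin m₁ × Fin m₂,
          (a q : ℝ) • (Pi.single q (1 : ℝ) : Fin m₁ × Fin m₂ → ℝ)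
            = (Pi.single q ((a q : ℝ)) : Fin m₁ × Fin m₂ → ℝ) := by
        intro q
        rw [← Pi.single_smul, smul_eq_mul, mul_one]
      have hdecomp : (fun p => (a p : ℝ))
          = ∑ q : Fin m₁ × Fin m₂,
              (a q : ℝ) • (Pi.single q (1 : ℝ) : Fin m₁ × Fin m₂ → ℝ) := by
        calc (fun p => (a p : ℝ))
            = ∑ q : Fin m₁ × Fin m₂, (Pi.single q ((a q : ℝ)) : Fin m₁ × Fin m₂ → ℝ) :=
              (Finset.univ_sum_single _).symm
          _ = _ := Finset.sum_congr rfl fun q _ => (h1 q).symm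
      rw [hdecomp]
      have hmv : (P ⊗ₖ Q).mulVec
            (∑ q : Fin m₁ × Fin m₂, (a q : ℝ) • (Pi.single q (1 : ℝ) : Fin m₁ × Fin m₂ → ℝ))
          = ∑ q : Fin m₁ × Fin m₂, (a q : ℝ) • (P ⊗ₖ Q).mulVec (Pi.single q (1 : ℝ)) := by
        simp only [← Matrix.mulVecLin_apply, map_sum, map_smul]
      rw [hmv]
      refine AddSubgroup.sum_mem _ fun q _ => ?_
      rw [Int.cast_smul_eq_zsmul ℝ]
      exact AddSubgroup.zsmul_mem _ (AddSubgroup.subset_closure (hcolmem q)) _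
    · have hle : AddSubgroup.closure S ≤ g.range := by
        rw [AddSubgroup.closure_le]
        rintro z ⟨x, hx, y, hy, rfl⟩
        rw [hLP] at hx
        rw [hLQ] at hy
        obtain ⟨a, rfl⟩ := hx
        obtain ⟨b, rfl⟩ := hy
        refine ⟨fun p => a p.1 * b p.2, ?_⟩
        show (P ⊗ₖ Q).mulVec (fun p => ((a p.1 * b p.2 : ℤ) : ℝ)) = _
        have hc : (fun p : Fin m₁ × Fin m₂ => ((a p.1 * b p.2 : ℤ) : ℝ))
            = fun p => (a p.1 : ℝ) * (b p.2 : ℝ) := by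
          funext p; push_cast; rfl
        rw [hc]
        exact kronAux_mulVec P Q (fun i => (a i : ℝ)) (fun i => (b i : ℝ))
      intro w hw
      obtain ⟨a, ha⟩ := hle hw
      exact ⟨a, ha⟩
end
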